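/- The function x ↦ (x−1)/2 − (1/ln(2.9/1.1))·ln(2.9/(1 + 2·ln(2.9/x)/ln(2.9/1.1))) is strictly decreasing on the interval [a₁, a₂]. -/

import Mathlib

noncomputable def a₁ : ℝ := 2.9 / (2.9 / 1.1) ^ (0.95 : ℝ)
noncomputable def a₂ : ℝ := 2.9 / (2.9 / 1.1) ^ (0.45 : ℝ)

open Real


lemma exp_upper' {x : ℝ} (hx : x < 1) : Real.exp x ≤ 1 / (1 - x) := by
  have h2 : 0 < 1 - x := by linarith
  rw [le_div_iff₀ h2]
  calc Real.exp x * (1 - x) ≤ Real.exp x * Real.exp (-x) := by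
        apply mul_le_mul_of_nonneg_left _ (Real.exp_pos x).le
        have := Real.add_one_le_exp (-x); linarith
    _ = 1 := by rw [← Real.exp_add]; simp

lemma exp_pow_eq' (x : ℝ) : Real.exp x = (Real.exp (x/64))^(64:ℕ) := by
  rw [← Real.exp_nat_mul]; ring_nf

lemma exp_lb' (x : ℝ) (hx : 0 ≤ x) : (1 + x/64)^(64:ℕ) ≤ Real.exp x := by
  rw [exp_pow_eq']
  apply pow_le_pow_left₀ (by positivity)
  have := Real.add_one_le_exp (x/64); linarith

lemma exp_ub' {x : ℝ} (hx' : x < 64) : Real.exp x ≤ (1 / (1 - x/64))^(64:ℕ) := by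
  rw [exp_pow_eq']
  exact pow_le_pow_left₀ (Real.exp_pos _).le (exp_upper' (by linarith)) _

lemma hLu' : Real.log (2.9/1.1) < 0.98 := by
  rw [Real.log_lt_iff_lt_exp (by norm_num)]
  calc (2.9/1.1 : ℝ) < (1 + 0.98/64)^(64:ℕ) := by norm_num
    _ ≤ Real.exp 0.98 := exp_lb' _ (by norm_num)

lemma hLl' : 0.96 < Real.log (2.9/1.1) := by
  rw [Real.lt_log_iff_exp_lt (by norm_num)]
  calc Real.exp 0.96 ≤ (1 / (1 - 0.96/64))^(64:ℕ) := exp_ub' (by norm_num)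
    _ < 2.9/1.1 := by norm_num

lemma hl19l' : 0.63 < Real.log 1.9 := by
  rw [Real.lt_log_iff_exp_lt (by norm_num)]
  calc Real.exp 0.63 ≤ (1 / (1 - 0.63/64))^(64:ℕ) := exp_ub' (by norm_num)
    _ < 1.9 := by norm_num

lemma hl19u' : Real.log 1.9 < 0.66 := by
  rw [Real.log_lt_iff_lt_exp (by norm_num)]
  calc (1.9:ℝ) < (1 + 0.66/64)^(64:ℕ) := by norm_num
    _ ≤ Real.exp 0.66 := exp_lb' _ (by norm_num)

lemma a1_pos : 0 < a₁ := by
  unfold a₁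
  positivity

lemma a2_ub : a₂ ≤ 1.895 := by
  unfold a₂
  have h1 : (2.9/1.1 : ℝ) ^ (0.45 : ℝ) = Real.exp (Real.log (2.9/1.1) * 0.45) :=
    Real.rpow_def_of_pos (by norm_num) _
  have h2 : (2.9:ℝ)/1.895 ≤ (2.9/1.1 : ℝ) ^ (0.45 : ℝ) := by
    rw [h1]
    calc (2.9:ℝ)/1.895 ≤ (1 + 0.432/64)^(64:ℕ) := by norm_num
      _ ≤ Real.exp 0.432 := exp_lb' _ (by norm_num)
      _ ≤ Real.exp (Real.log (2.9/1.1) * 0.45) := by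
          apply Real.exp_le_exp.2
          nlinarith [hLl']
  calc 2.9 / (2.9/1.1 : ℝ) ^ (0.45 : ℝ) ≤ 2.9 / ((2.9:ℝ)/1.895) := by
        apply div_le_div_of_nonneg_left (by norm_num) (by norm_num) h2
    _ = 1.895 := by norm_num

lemma a2_lt : a₂ < 2.9 := a2_ub.trans_lt (by norm_num)

lemma key_deriv (x : ℝ) (hx0 : 0 < x) (hx29 : x < 2.9) :
    HasDerivAt (fun x : ℝ => (x - 1) / 2 - (1 / Real.log (2.9 / 1.1)) *
      Real.log (2.9 / (1 + 2 * Real.log (2.9 / x) / Real.log (2.9 / 1.1))))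
      (1/2 - 2/((Real.log (2.9/1.1))^2 * x *
        (1 + 2 * Real.log (2.9/x) / Real.log (2.9/1.1)))) x := by
  set L := Real.log (2.9/1.1) with hLdef
  have hL : 0 < L := lt_trans (by norm_num) hLl'
  have hxne : x ≠ 0 := hx0.ne'
  have hq : (2.9:ℝ)/x ≠ 0 := by positivity
  have ht : 0 < Real.log (2.9/x) :=
    Real.log_pos (by rw [lt_div_iff₀ hx0]; linarith)
  have hH : 0 < 1 + 2 * Real.log (2.9/x) / L := by positivity
  have d1 : HasDerivAt (fun y : ℝ => 2.9/y) (2.9 * (-(x^2)⁻¹)) x := by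
    simpa [div_eq_mul_inv] using (hasDerivAt_inv hxne).const_mul (2.9:ℝ)
  have d2 : HasDerivAt (fun y : ℝ => Real.log (2.9/y)) (-x⁻¹) x := by
    have := d1.log hq
    convert this using 1
    field_simp
  have d3 : HasDerivAt (fun y : ℝ => 1 + 2 * Real.log (2.9/y) / L)
      (2 * (-x⁻¹) / L) x := ((d2.const_mul 2).div_const L).const_add 1
  have d4 : HasDerivAt (fun y : ℝ => 2.9 / (1 + 2 * Real.log (2.9/y) / L))
      ((0 * (1 + 2 * Real.log (2.9/x) / L) - 2.9 * (2 * (-x⁻¹) / L)) /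
        (1 + 2 * Real.log (2.9/x) / L)^2) x :=
    (hasDerivAt_const x (2.9:ℝ)).div d3 hH.ne'
  have d5 := d4.log (by positivity)
  have d6 := (((hasDerivAt_id x).sub_const 1).div_const 2).sub (d5.const_mul (1/L))
  refine d6.congr_deriv ?_
  field_simp
  ring

/-- The middle branch of `r` is strictly decreasing on `[a₁, a₂]`. -/
theorem statement7 :
    StrictAntiOn (fun x : ℝ => (x - 1) / 2 - (1 / Real.log (2.9 / 1.1)) *
      Real.log (2.9 / (1 + 2 * Real.log (2.9 / x) / Real.log (2.9 / 1.1))))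
      (Set.Icc a₁ a₂) := by
  have hbnd : ∀ x ∈ Set.Icc a₁ a₂, 0 < x ∧ x < 2.9 := fun x hx =>
    ⟨a1_pos.trans_le hx.1, lt_of_le_of_lt (hx.2.trans a2_ub) (by norm_num)⟩
  apply strictAntiOn_of_deriv_neg (convex_Icc _ _)
  · intro x hx
    obtain ⟨h1, h2⟩ := hbnd x hx
    exact (key_deriv x h1 h2).continuousAt.continuousWithinAt
  · intro x hx
    rw [interior_Icc] at hx
    have h1 : 0 < x := a1_pos.trans hx.1
    have h2 : x ≤ 1.895 := hx.2.le.trans a2_ub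
    have h29 : x < 2.9 := by linarith
    rw [(key_deriv x h1 h29).deriv]
    set L := Real.log (2.9/1.1) with hLdef
    set t := Real.log (2.9/x) with htdef
    have hLl : (0.96:ℝ) < L := hLl'
    have hLu : L < 0.98 := hLu'
    have hL : 0 < L := by linarith
    have ht : 0 < t :=
      Real.log_pos (by rw [lt_div_iff₀ h1]; linarith)
    have hH : 0 < 1 + 2 * t / L := by positivity
    have hPpos : 0 < L^2 * x * (1 + 2 * t / L) := by positivity
    -- upper bound on t
    have hsplit : (2.9:ℝ)/x = 1.9 * (2.9/(1.9*x)) := by field_simp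
    have htu : t ≤ Real.log 1.9 + (2.9/(1.9*x) - 1) := by
      rw [htdef, hsplit, Real.log_mul (by norm_num) (by positivity)]
      have := Real.log_le_sub_one_of_pos (show (0:ℝ) < 2.9/(1.9*x) by positivity)
      linarith
    have hxt : x * t ≤ x * Real.log 1.9 + 29/19 - x := by
      have h := mul_le_mul_of_nonneg_left htu h1.le
      have hc : x * (2.9/(1.9*x)) = 29/19 := by field_simp; ring
      nlinarith
    have hPlt : L^2 * x * (1 + 2 * t / L) < 4 := by
      have e : L^2 * x * (1 + 2 * t / L) = x*L*L + 2*L*(x*t) := by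
        field_simp
      rw [e]
      nlinarith [hl19l', hl19u', mul_le_mul_of_nonneg_left hxt (by linarith : (0:ℝ) ≤ 2*L),
        mul_pos h1 ht, sq_nonneg (L - 0.97)]
    have : (1:ℝ)/2 < 2 / (L^2 * x * (1 + 2 * t / L)) := by
      rw [div_lt_div_iff₀ (by norm_num) hPpos]
      linarith
    linarith
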